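/- For all b, c, d ∈ ℂ, the system of equations x² + b·y² + 2c·x·y + 2d·x = 0, 2x + 2c·y + 2d = 0, 2b·y + 2c·x = 0 has exactly one solution (x, y) ∈ ℂ² if and only if (b = 0 and c ≠ 0) or (d = 0 and b ≠ c²). In other words, the conic x² + b·y² + 2c·x·y + 2d·x = 0 has exactly one singular point if and only if (b = 0 and c ≠ 0) or (d = 0 and b − c² ≠ 0). -/
import Mathlib


/-- For parameters b, c, d ∈ ℂ, the conic x² + b·y² + 2c·x·y + 2d·x = 0 has exactly one
singular point (i.e., the system of the conic together with its two partial derivatives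
has exactly one solution) iff (b = 0 ∧ c ≠ 0) ∨ (d = 0 ∧ b ≠ c²). -/
theorem stmt_9 (b c d : ℂ) :
    (∃! p : ℂ × ℂ,
        p.1 ^ 2 + b * p.2 ^ 2 + 2 * c * p.1 * p.2 + 2 * d * p.1 = 0 ∧
        2 * p.1 + 2 * c * p.2 + 2 * d = 0 ∧
        2 * b * p.2 + 2 * c * p.1 = 0) ↔
      (b = 0 ∧ c ≠ 0) ∨ (d = 0 ∧ b ≠ c ^ 2) := by
  constructor
  · rintro ⟨p, ⟨h1, h2, h3⟩, huniq⟩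
    by_contra hR
    push_neg at hR
    obtain ⟨hbc, hdb⟩ := hR
    by_cases hd : d = 0
    · have hb : b = c ^ 2 := hdb hd
      subst hd; subst hb
      have e0 : ((0, 0) : ℂ × ℂ) = p := huniq (0, 0) ⟨by ring, by ring, by ring⟩
      have e1 : ((-c, 1) : ℂ × ℂ) = p := huniq (-c, 1) ⟨by ring, by ring, by ring⟩
      have : ((0 : ℂ), (0 : ℂ)).2 = ((-c, 1) : ℂ × ℂ).2 := by rw [e0, e1]
      simp at this
    · have hx : d * p.1 = 0 := by
        linear_combination h1 - p.1 / 2 * h2 - p.2 / 2 * h3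
      have hx0 : p.1 = 0 := by
        rcases mul_eq_zero.mp hx with h | h
        · exact absurd h hd
        · exact h
      by_cases hc : c = 0
      · rw [hx0, hc] at h2
        apply hd
        have : (2 : ℂ) * d = 0 := by linear_combination h2
        have h2ne : (2 : ℂ) ≠ 0 := by norm_num
        exact (mul_eq_zero.mp this).resolve_left h2ne
      · have hb : b ≠ 0 := fun h => hc (hbc h)
        rw [hx0] at h2 h3
        have hy : p.2 = 0 := by
          have : (2 * b) * p.2 = 0 := by linear_combination h3
          rcases mul_eq_zero.mp this with h | h
          · exact absurd ((mul_eq_zero.mp h).resolve_left (by norm_num)) hb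
          · exact h
        rw [hy] at h2
        apply hd
        have : (2 : ℂ) * d = 0 := by linear_combination h2
        exact (mul_eq_zero.mp this).resolve_left (by norm_num)
  · rintro (⟨hb, hc⟩ | ⟨hd, hb⟩)
    · subst hb
      refine ⟨(0, -d / c), ⟨by ring, by field_simp; ring, by ring⟩, ?_⟩
      rintro ⟨x, y⟩ ⟨g1, g2, g3⟩
      simp only [Prod.mk.injEq]
      have hx : x = 0 := by
        have : (2 * c) * x = 0 := by linear_combination g3
        rcases mul_eq_zero.mp this with h | h
        · exact absurd ((mul_eq_zero.mp h).resolve_left (by norm_num)) hc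
        · exact h
      refine ⟨hx, ?_⟩
      rw [hx] at g2
      rw [eq_div_iff hc]
      linear_combination g2 / 2
    · subst hd
      refine ⟨(0, 0), ⟨by ring, by ring, by ring⟩, ?_⟩
      rintro ⟨x, y⟩ ⟨g1, g2, g3⟩
      simp only [Prod.mk.injEq]
      have hy : y = 0 := by
        have h : (b - c ^ 2) * y = 0 := by linear_combination g3 / 2 - c / 2 * g2
        rcases mul_eq_zero.mp h with h' | h'
        · exact absurd (sub_eq_zero.mp h') hb
        · exact h'
      have hx : x = 0 := by
        rw [hy] at g2
        have : (2 : ℂ) * x = 0 := by linear_combination g2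
        exact (mul_eq_zero.mp this).resolve_left (by norm_num)
      exact ⟨hx, hy⟩
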